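/- Let r be a positive integer, w = (w₁, w₁', w₂, w₂') ∈ ℤ≥0⁴, and let v₁', v₂' be nonnegative integers with v₁' ≤ w₁' and v₂' ≤ w₂. Consider tuples (P, Q, Z₁', Z₂', C₁, …, C_r) of complex matrices of sizes (w₁'−v₁')×v₁', v₂'×(w₂−v₂'), v₁'×w₁, w₂'×v₂', and v₁'×v₂' (for each C_h), respectively, subject to the two conditions: the v₁'×(w₁ + r·v₂') matrix [Z₁' C₁ ⋯ C_r] has rank v₁', and the (w₂' + r·v₁')×v₂' matrix obtained by stacking Z₂', C₁, …, C_r vertically has rank v₂'. Then the assignment sending such a tuple to (x₁, x₂, y₁, …, y_r), where x₁ is the w₁'×w₁ matrix with top block Z₁' and bottom block P·Z₁', x₂ is the w₂'×w₂ matrix with left block Z₂' and right block Z₂'·Q, and each y_h is the w₁'×w₂ matrix with blocks [[C_h, C_h·Q],[P·C_h, P·C_h·Q]], is a bijection onto the set of tuples (x₁, x₂, y₁, …, y_r) ∈ E_w such that rank A = v₁', rank B = v₂', the first v₁' rows of A are linearly independent, and the first v₂' columns of B are linearly independent. -/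

import Mathlib

open Matrix

noncomputable section

/-- The space `E_w` of tuples `(x₁, x₂, y₁, …, y_r)` of complex matrices, where `x₁` has size
`w₁'×w₁`, `x₂` has size `w₂'×w₂`, and each `y_h` has size `w₁'×w₂`. -/
abbrev EW (r w₁ w₁' w₂ w₂' : ℕ) : Type :=
  Matrix (Fin w₁') (Fin w₁) ℂ × Matrix (Fin w₂') (Fin w₂) ℂ ×
    (Fin r → Matrix (Fin w₁') (Fin w₂) ℂ)

/-- The horizontally concatenated block matrix `A = [x₁ y₁ ⋯ y_r]`. -/
def matA {r m a b : ℕ} (x₁ : Matrix (Fin m) (Fin a) ℂ)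
    (y : Fin r → Matrix (Fin m) (Fin b) ℂ) :
    Matrix (Fin m) (Fin a ⊕ Fin r × Fin b) ℂ :=
  Matrix.of fun i => Sum.elim (fun j => x₁ i j) (fun p => y p.1 i p.2)

/-- The vertically stacked block matrix `B = [x₂; y₁; ⋯; y_r]`. -/
def matB {r n a b : ℕ} (x₂ : Matrix (Fin a) (Fin n) ℂ)
    (y : Fin r → Matrix (Fin b) (Fin n) ℂ) :
    Matrix (Fin a ⊕ Fin r × Fin b) (Fin n) ℂ :=
  Matrix.of fun i j => Sum.elim (fun i₂ => x₂ i₂ j) (fun p => y p.1 p.2 j) i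

/-- The subspace `ℂ^{w₂'} × X₁^{×r}` of `ℂ^{w₂'} × (ℂ^{w₁'})^r`: all tuples `(a, u₁, …, u_r)`
whose last `r` components `u_h` all lie in `X₁`. -/
def prodSub (r w₂' w₁' : ℕ) (X₁ : Submodule ℂ (Fin w₁' → ℂ)) :
    Submodule ℂ (Fin w₂' ⊕ Fin r × Fin w₁' → ℂ) :=
  ⨅ h : Fin r, X₁.comap (LinearMap.funLeft ℂ ℂ fun i => Sum.inr (h, i))

/-- Vertical stacking of two matrices with `Fin` row index types. -/
def vstack {a b n : ℕ} (M : Matrix (Fin a) (Fin n) ℂ) (N : Matrix (Fin b) (Fin n) ℂ) :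
    Matrix (Fin (a + b)) (Fin n) ℂ :=
  Matrix.of fun i j => Fin.addCases (fun i₁ => M i₁ j) (fun i₂ => N i₂ j) i

/-- Horizontal concatenation of two matrices with `Fin` column index types. -/
def hstack {m a b : ℕ} (M : Matrix (Fin m) (Fin a) ℂ) (N : Matrix (Fin m) (Fin b) ℂ) :
    Matrix (Fin m) (Fin (a + b)) ℂ :=
  Matrix.of fun i j => Fin.addCases (fun j₁ => M i j₁) (fun j₂ => N i j₂) j

namespace Stmt18Aux

open Submodule Module

/-- rank = number of rows iff rows independent -/
lemma rank_eq_card_iff {n : Type*} [Fintype n] {v : ℕ} (M : Matrix (Fin v) n ℂ) :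
    M.rank = v ↔ LinearIndependent ℂ M := by
  change M.rank = v ↔ LinearIndependent ℂ M.row
  rw [linearIndependent_iff_card_eq_finrank_span, Set.finrank, Fintype.card_fin,
    Matrix.rank_eq_finrank_span_row, eq_comm]

/-- rank invariant under reindexing by equivs -/
lemma rank_submatrix_equiv {m n m' n' : Type*} [Fintype n] [Fintype n'] [Finite m] [Finite m']
    (A : Matrix m n ℂ) (e₁ : m' ≃ m) (e₂ : n' ≃ n) :
    (A.submatrix e₁ e₂).rank = A.rank := by
  rw [Matrix.rank_eq_finrank_span_row, Matrix.rank_eq_finrank_span_row]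
  have h1 : Set.range (A.submatrix ⇑e₁ ⇑e₂)
      = (LinearMap.funLeft ℂ ℂ ⇑e₂) '' Set.range A := by
    ext u
    constructor
    · rintro ⟨i, rfl⟩; exact ⟨A (e₁ i), ⟨_, rfl⟩, rfl⟩
    · rintro ⟨-, ⟨i, rfl⟩, rfl⟩
      exact ⟨e₁.symm i, by ext c; simp [Matrix.submatrix_apply, LinearMap.funLeft_apply]⟩
  change finrank ℂ (span ℂ (Set.range (A.submatrix e₁ e₂))) = finrank ℂ (span ℂ (Set.range A))
  rw [h1, Submodule.span_image]
  exact LinearEquiv.finrank_map_eq (LinearEquiv.funCongrLeft ℂ ℂ e₂) _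

lemma lin_indep_cancel {v k : ℕ} {n : Type*} [Fintype n] {M : Matrix (Fin v) n ℂ}
    (hM : LinearIndependent ℂ M) {P P' : Matrix (Fin k) (Fin v) ℂ}
    (h : P * M = P' * M) : P = P' := by
  ext i l
  have key : ∀ g : Fin v → ℂ, (∑ x, g x • M x = 0) → ∀ x, g x = 0 :=
    Fintype.linearIndependent_iff.mp hM
  have h0 : (∑ x, (P i x - P' i x) • M x) = 0 := by
    funext c
    have := congrFun (congrFun h i) c
    simp only [Matrix.mul_apply] at this
    simp only [Finset.sum_apply, Pi.smul_apply, smul_eq_mul, sub_mul, Pi.zero_apply,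
      Finset.sum_sub_distrib, this, sub_self]
  exact sub_eq_zero.mp (key _ h0 l)

lemma exists_coeffs {k v : ℕ} {n : Type*} [Fintype n] (M : Matrix (Fin (v + k)) n ℂ)
    (hrank : M.rank = v)
    (hind : LinearIndependent ℂ fun i : Fin v => M (Fin.castAdd k i)) :
    ∃ P : Matrix (Fin k) (Fin v) ℂ,
      ∀ i, M (Fin.natAdd v i) = ∑ l, P i l • M (Fin.castAdd k l) := by
  set W := span ℂ (Set.range M) with hW
  have hle : span ℂ (Set.range fun i : Fin v => M (Fin.castAdd k i)) ≤ W :=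
    span_mono (by rintro - ⟨i, rfl⟩; exact ⟨_, rfl⟩)
  have hfr : finrank ℂ W = v := by
    rw [hW]; exact (Matrix.rank_eq_finrank_span_row M).symm.trans hrank
  have hfr2 : finrank ℂ (span ℂ (Set.range fun i : Fin v => M (Fin.castAdd k i))) = v := by
    rw [finrank_span_eq_card hind, Fintype.card_fin]
  have heq : span ℂ (Set.range fun i : Fin v => M (Fin.castAdd k i)) = W :=
    Submodule.eq_of_le_of_finrank_le hle (by rw [hfr, hfr2])
  have H : ∀ i : Fin k, ∃ c : Fin v → ℂ,
      ∑ l, c l • M (Fin.castAdd k l) = M (Fin.natAdd v i) := by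
    intro i
    have : M (Fin.natAdd v i) ∈ W := subset_span ⟨_, rfl⟩
    rw [← heq] at this
    exact mem_span_range_iff_exists_fun ℂ |>.mp this
  choose P hP using H
  exact ⟨Matrix.of P, fun i => (hP i).symm⟩

@[simp] lemma vstack_castAdd {a b n : ℕ} (M : Matrix (Fin a) (Fin n) ℂ)
    (N : Matrix (Fin b) (Fin n) ℂ) (i : Fin a) (j : Fin n) :
    vstack M N (Fin.castAdd b i) j = M i j := by simp [vstack]

@[simp] lemma vstack_natAdd {a b n : ℕ} (M : Matrix (Fin a) (Fin n) ℂ)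
    (N : Matrix (Fin b) (Fin n) ℂ) (i : Fin b) (j : Fin n) :
    vstack M N (Fin.natAdd a i) j = N i j := by simp [vstack]

@[simp] lemma hstack_castAdd {m a b : ℕ} (M : Matrix (Fin m) (Fin a) ℂ)
    (N : Matrix (Fin m) (Fin b) ℂ) (i : Fin m) (j : Fin a) :
    hstack M N i (Fin.castAdd b j) = M i j := by simp [hstack]

@[simp] lemma hstack_natAdd {m a b : ℕ} (M : Matrix (Fin m) (Fin a) ℂ)
    (N : Matrix (Fin m) (Fin b) ℂ) (i : Fin m) (j : Fin b) :
    hstack M N i (Fin.natAdd a j) = N i j := by simp [hstack]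

variable {r a v d b e : ℕ}

/-- The uncasted big `A`-shaped matrix built from `(P, Q, Z, C)`. -/
def bigA (P : Matrix (Fin d) (Fin v) ℂ) (Q : Matrix (Fin b) (Fin e) ℂ)
    (Z : Matrix (Fin v) (Fin a) ℂ) (C : Fin r → Matrix (Fin v) (Fin b) ℂ) :
    Matrix (Fin (v + d)) (Fin a ⊕ Fin r × Fin (b + e)) ℂ :=
  matA (vstack Z (P * Z))
    (fun h => vstack (hstack (C h) (C h * Q)) (hstack (P * C h) (P * C h * Q)))

variable {P : Matrix (Fin d) (Fin v) ℂ} {Q : Matrix (Fin b) (Fin e) ℂ}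
    {Z : Matrix (Fin v) (Fin a) ℂ} {C : Fin r → Matrix (Fin v) (Fin b) ℂ}

@[simp] lemma bigA_cl (i : Fin v) (j : Fin a) :
    bigA P Q Z C (Fin.castAdd d i) (Sum.inl j) = Z i j := by simp [bigA, matA]

@[simp] lemma bigA_nl (i : Fin d) (j : Fin a) :
    bigA P Q Z C (Fin.natAdd v i) (Sum.inl j) = (P * Z) i j := by simp [bigA, matA]

@[simp] lemma bigA_cc (i : Fin v) (h : Fin r) (j : Fin b) :
    bigA P Q Z C (Fin.castAdd d i) (Sum.inr (h, Fin.castAdd e j)) = C h i j := by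
  simp [bigA, matA]

@[simp] lemma bigA_cn (i : Fin v) (h : Fin r) (j : Fin e) :
    bigA P Q Z C (Fin.castAdd d i) (Sum.inr (h, Fin.natAdd b j)) = (C h * Q) i j := by
  simp [bigA, matA]

@[simp] lemma bigA_nc (i : Fin d) (h : Fin r) (j : Fin b) :
    bigA P Q Z C (Fin.natAdd v i) (Sum.inr (h, Fin.castAdd e j)) = (P * C h) i j := by
  simp [bigA, matA]

@[simp] lemma bigA_nn (i : Fin d) (h : Fin r) (j : Fin e) :
    bigA P Q Z C (Fin.natAdd v i) (Sum.inr (h, Fin.natAdd b j)) = (P * C h * Q) i j := by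
  simp [bigA, matA]


/-- top rows of `bigA` are independent when the small `matA` has independent rows -/
lemma bigA_top_indep (hind : LinearIndependent ℂ (matA Z C)) :
    LinearIndependent ℂ (fun i : Fin v => bigA P Q Z C (Fin.castAdd d i)) := by
  apply LinearIndependent.of_comp
    (LinearMap.funLeft ℂ ℂ (Sum.map id (Prod.map id (Fin.castAdd e))))
  convert (show LinearIndependent ℂ (matA Z C).row from hind) using 1
  funext i c
  rcases c with j | ⟨h, j⟩
  · simp [LinearMap.funLeft_apply, matA, Matrix.row_def]
  · simp [LinearMap.funLeft_apply, matA, Matrix.row_def]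

/-- bottom rows of `bigA` are combinations of top rows -/
lemma bigA_bottom (i : Fin d) :
    bigA P Q Z C (Fin.natAdd v i) = ∑ k, P i k • bigA P Q Z C (Fin.castAdd d k) := by
  funext c
  rcases c with j | ⟨h, j⟩
  · simp [Finset.sum_apply, Matrix.mul_apply]
  · refine Fin.addCases (fun j => ?_) (fun j => ?_) j
    · simp [Finset.sum_apply, Matrix.mul_apply]
    · simp only [bigA_nn, bigA_cn, Finset.sum_apply, Pi.smul_apply, smul_eq_mul]
      rw [Matrix.mul_assoc, Matrix.mul_apply]

lemma bigA_span_rows :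
    span ℂ (Set.range (bigA P Q Z C))
      = span ℂ (Set.range fun i : Fin v => bigA P Q Z C (Fin.castAdd d i)) := by
  refine le_antisymm (span_le.2 ?_) (span_mono ?_)
  · rintro - ⟨i, rfl⟩
    refine Fin.addCases (fun i => ?_) (fun i => ?_) i
    · exact subset_span ⟨i, rfl⟩
    · rw [bigA_bottom]
      exact sum_mem fun k _ => smul_mem _ _ (subset_span ⟨k, rfl⟩)
  · rintro - ⟨i, rfl⟩
    exact ⟨_, rfl⟩

lemma bigA_rank (hind : LinearIndependent ℂ (matA Z C)) :
    (bigA P Q Z C).rank = v := by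
  rw [Matrix.rank_eq_finrank_span_row]
  change finrank ℂ (span ℂ (Set.range (bigA P Q Z C))) = v
  rw [bigA_span_rows,
    finrank_span_eq_card (bigA_top_indep hind), Fintype.card_fin]

/-- conversely, if the top rows of `bigA` are independent then so are the rows of the
small `matA`. -/
lemma bigA_small_indep
    (hind : LinearIndependent ℂ (fun i : Fin v => bigA P Q Z C (Fin.castAdd d i))) :
    LinearIndependent ℂ (matA Z C) := by
  rw [← rank_eq_card_iff]
  set T : Matrix (Fin v) (Fin a ⊕ Fin r × Fin (b + e)) ℂ :=
    Matrix.of (fun i => bigA P Q Z C (Fin.castAdd d i)) with hT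
  have hTrank : T.rank = v := (rank_eq_card_iff T).mpr hind
  have hspan : span ℂ (Set.range (matA Z C)ᵀ) = span ℂ (Set.range Tᵀ) := by
    refine le_antisymm (span_le.2 ?_) (span_le.2 ?_)
    · rintro - ⟨c, rfl⟩
      rcases c with j | ⟨h, j⟩
      · refine subset_span ⟨Sum.inl j, ?_⟩
        funext i; simp [hT, matA]
      · refine subset_span ⟨Sum.inr (h, Fin.castAdd e j), ?_⟩
        funext i; simp [hT, matA]
    · rintro - ⟨c, rfl⟩
      rcases c with j | ⟨h, j⟩
      · refine subset_span ⟨Sum.inl j, ?_⟩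
        funext i; simp [hT, matA]
      · refine Fin.addCases (fun j => ?_) (fun j => ?_) j
        · refine subset_span ⟨Sum.inr (h, j), ?_⟩
          funext i; simp [hT, matA]
        · have : Tᵀ (Sum.inr (h, Fin.natAdd b j))
              = ∑ l, Q l j • (matA Z C)ᵀ (Sum.inr (h, l)) := by
            funext i
            simp [hT, matA, Matrix.mul_apply, Finset.sum_apply, mul_comm]
          rw [this]
          exact sum_mem fun l _ => smul_mem _ _ (subset_span ⟨_, rfl⟩)
  rw [Matrix.rank_eq_finrank_span_cols]
  change finrank ℂ (span ℂ (Set.range (matA Z C)ᵀ)) = v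
  rw [hspan]
  exact (Matrix.rank_eq_finrank_span_cols T).symm.trans hTrank



@[simp] lemma cast_castLE {w v d : ℕ} (h : w = v + d) (hv : v ≤ w) (i : Fin v) :
    Fin.cast h (Fin.castLE hv i) = Fin.castAdd d i := rfl

@[simp] lemma cast_symm_castAdd {w v d : ℕ} (h : w = v + d) (hv : v ≤ w) (i : Fin v) :
    Fin.cast h.symm (Fin.castAdd d i) = Fin.castLE hv i := rfl

@[simp] lemma cast_cast {w v d : ℕ} (h : w = v + d) (i : Fin d) :
    Fin.cast h (Fin.cast h.symm (Fin.natAdd v i)) = Fin.natAdd v i := rfl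

lemma mul_matA {r m a b k : ℕ} (N : Matrix (Fin k) (Fin m) ℂ)
    (Z : Matrix (Fin m) (Fin a) ℂ) (C : Fin r → Matrix (Fin m) (Fin b) ℂ) :
    N * matA Z C = matA (N * Z) (fun h => N * C h) := by
  ext i c
  rcases c with j | ⟨h, j⟩ <;> simp [matA, Matrix.mul_apply]

lemma matB_transpose {r n a b : ℕ} (x : Matrix (Fin a) (Fin n) ℂ)
    (y : Fin r → Matrix (Fin b) (Fin n) ℂ) :
    (matB x y)ᵀ = matA xᵀ (fun h => (y h)ᵀ) := by
  ext i c
  rcases c with j | ⟨h, j⟩ <;> rfl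

lemma matA_bridge {r w₁ w₁' w₂ v d b e : ℕ} (h₁ : w₁' = v + d) (h₂ : w₂ = b + e)
    (P : Matrix (Fin d) (Fin v) ℂ) (Q : Matrix (Fin b) (Fin e) ℂ)
    (Z : Matrix (Fin v) (Fin w₁) ℂ) (C : Fin r → Matrix (Fin v) (Fin b) ℂ) :
    matA ((vstack Z (P * Z)).submatrix (Fin.cast h₁) id)
        (fun h => (vstack (hstack (C h) (C h * Q)) (hstack (P * C h) (P * C h * Q))).submatrix
          (Fin.cast h₁) (Fin.cast h₂))
      = (bigA P Q Z C).submatrix (Fin.cast h₁)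
          (Sum.map id (Prod.map id (Fin.cast h₂))) := by
  ext i c
  rcases c with j | ⟨h, j⟩ <;> rfl

lemma matB_bridge {r w₁' w₂ w₂' v d b e : ℕ} (h₁ : w₁' = b + e) (h₂ : w₂ = v + d)
    (P : Matrix (Fin e) (Fin b) ℂ) (Q : Matrix (Fin v) (Fin d) ℂ)
    (Z₂ : Matrix (Fin w₂') (Fin v) ℂ) (C : Fin r → Matrix (Fin b) (Fin v) ℂ) :
    (matB ((hstack Z₂ (Z₂ * Q)).submatrix id (Fin.cast h₂))
        (fun h => (vstack (hstack (C h) (C h * Q)) (hstack (P * C h) (P * C h * Q))).submatrix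
          (Fin.cast h₁) (Fin.cast h₂)))ᵀ
      = (bigA Qᵀ Pᵀ Z₂ᵀ (fun h => (C h)ᵀ)).submatrix (Fin.cast h₂)
          (Sum.map id (Prod.map id (Fin.cast h₁))) := by
  ext i c
  rcases c with j | ⟨h, j⟩
  · show hstack Z₂ (Z₂ * Q) j (Fin.cast h₂ i)
        = vstack Z₂ᵀ (Qᵀ * Z₂ᵀ) (Fin.cast h₂ i) j
    generalize Fin.cast h₂ i = i'
    refine Fin.addCases (fun i₀ => ?_) (fun i₀ => ?_) i'
    · simp
    · simp [← Matrix.transpose_mul]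
  · show (vstack (hstack (C h) (C h * Q)) (hstack (P * C h) (P * C h * Q)))
        (Fin.cast h₁ j) (Fin.cast h₂ i)
      = (vstack (hstack (C h)ᵀ ((C h)ᵀ * Pᵀ)) (hstack (Qᵀ * (C h)ᵀ) (Qᵀ * (C h)ᵀ * Pᵀ)))
        (Fin.cast h₂ i) (Fin.cast h₁ j)
    generalize Fin.cast h₂ i = i'
    generalize Fin.cast h₁ j = j'
    refine Fin.addCases (fun i₀ => ?_) (fun i₀ => ?_) i' <;>
      refine Fin.addCases (fun j₀ => ?_) (fun j₀ => ?_) j' <;>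
        simp [← Matrix.transpose_mul, Matrix.mul_assoc]


@[simp] lemma cast_cast' {w v d : ℕ} (h : w = v + d) (h' : v + d = w) (i : Fin d) :
    Fin.cast h (Fin.cast h' (Fin.natAdd v i)) = Fin.natAdd v i := rfl

lemma keyA {r w₁ w₁' w₂ v d b e : ℕ} (h₁ : w₁' = v + d) (h₂ : w₂ = b + e) (hv : v ≤ w₁')
    (P : Matrix (Fin d) (Fin v) ℂ) (Q : Matrix (Fin b) (Fin e) ℂ)
    (Z : Matrix (Fin v) (Fin w₁) ℂ) (C : Fin r → Matrix (Fin v) (Fin b) ℂ) :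
    (fun i : Fin v => matA ((vstack Z (P * Z)).submatrix (Fin.cast h₁) id)
        (fun h => (vstack (hstack (C h) (C h * Q)) (hstack (P * C h) (P * C h * Q))).submatrix
          (Fin.cast h₁) (Fin.cast h₂)) (Fin.castLE hv i))
      = ⇑(LinearMap.funLeft ℂ ℂ (Sum.map id (Prod.map id (Fin.cast h₂))))
          ∘ (fun i => bigA P Q Z C (Fin.castAdd d i)) := by
  funext i
  funext c
  exact congrFun (congrFun (matA_bridge h₁ h₂ P Q Z C) (Fin.castLE hv i)) c

lemma keyB {r w₁' w₂ w₂' v d b e : ℕ} (h₁ : w₁' = b + e) (h₂ : w₂ = v + d) (hv : v ≤ w₂)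
    (P : Matrix (Fin e) (Fin b) ℂ) (Q : Matrix (Fin v) (Fin d) ℂ)
    (Z₂ : Matrix (Fin w₂') (Fin v) ℂ) (C : Fin r → Matrix (Fin b) (Fin v) ℂ) :
    (fun j : Fin v => fun i => matB ((hstack Z₂ (Z₂ * Q)).submatrix id (Fin.cast h₂))
        (fun h => (vstack (hstack (C h) (C h * Q)) (hstack (P * C h) (P * C h * Q))).submatrix
          (Fin.cast h₁) (Fin.cast h₂)) i (Fin.castLE hv j))
      = ⇑(LinearMap.funLeft ℂ ℂ (Sum.map id (Prod.map id (Fin.cast h₁))))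
          ∘ (fun j => bigA Qᵀ Pᵀ Z₂ᵀ (fun h => (C h)ᵀ) (Fin.castAdd d j)) := by
  funext j
  funext i
  exact congrFun (congrFun (matB_bridge h₁ h₂ P Q Z₂ C) (Fin.castLE hv j)) i

end Stmt18Aux

open Stmt18Aux

theorem stmt_18 (r w₁ w₁' w₂ w₂' v₁' v₂' : ℕ) (hr : 0 < r)
    (hv₁ : v₁' ≤ w₁') (hv₂ : v₂' ≤ w₂) :
    Set.BijOn
      (fun t : Matrix (Fin (w₁' - v₁')) (Fin v₁') ℂ × Matrix (Fin v₂') (Fin (w₂ - v₂')) ℂ ×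
          Matrix (Fin v₁') (Fin w₁) ℂ × Matrix (Fin w₂') (Fin v₂') ℂ ×
          (Fin r → Matrix (Fin v₁') (Fin v₂') ℂ) =>
        match t with
        | (P, Q, Z₁, Z₂, C) =>
          (((vstack Z₁ (P * Z₁)).submatrix
                (Fin.cast (Nat.add_sub_cancel' hv₁).symm) id,
              (hstack Z₂ (Z₂ * Q)).submatrix id
                (Fin.cast (Nat.add_sub_cancel' hv₂).symm),
              fun h =>
                (vstack (hstack (C h) (C h * Q))
                    (hstack (P * C h) (P * C h * Q))).submatrix
                  (Fin.cast (Nat.add_sub_cancel' hv₁).symm)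
                  (Fin.cast (Nat.add_sub_cancel' hv₂).symm)) :
            EW r w₁ w₁' w₂ w₂'))
      {t | (matA t.2.2.1 t.2.2.2.2).rank = v₁' ∧ (matB t.2.2.2.1 t.2.2.2.2).rank = v₂'}
      {p | (matA p.1 p.2.2).rank = v₁' ∧ (matB p.2.1 p.2.2).rank = v₂' ∧
          LinearIndependent ℂ (fun i : Fin v₁' => matA p.1 p.2.2 (Fin.castLE hv₁ i)) ∧
          LinearIndependent ℂ
            (fun j : Fin v₂' => fun i => matB p.2.1 p.2.2 i (Fin.castLE hv₂ j))} := by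
  have h₁ : w₁' = v₁' + (w₁' - v₁') := (Nat.add_sub_cancel' hv₁).symm
  have h₂ : w₂ = v₂' + (w₂ - v₂') := (Nat.add_sub_cancel' hv₂).symm
  have σAsurj : Function.Surjective
      (Sum.map (@id (Fin w₁)) (Prod.map (@id (Fin r)) (Fin.cast h₂))) := by
    rintro (j | ⟨h, j⟩)
    · exact ⟨Sum.inl j, rfl⟩
    · exact ⟨Sum.inr (h, Fin.cast h₂.symm j), rfl⟩
  have σBsurj : Function.Surjective
      (Sum.map (@id (Fin w₂')) (Prod.map (@id (Fin r)) (Fin.cast h₁))) := by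
    rintro (j | ⟨h, j⟩)
    · exact ⟨Sum.inl j, rfl⟩
    · exact ⟨Sum.inr (h, Fin.cast h₁.symm j), rfl⟩
  refine ⟨?_, ?_, ?_⟩
  · -- MapsTo
    rintro ⟨P, Q, Z₁, Z₂, C⟩ ⟨hA, hB⟩
    have hsmallA : LinearIndependent ℂ (matA Z₁ C) := (rank_eq_card_iff _).mp hA
    have hsmallB : LinearIndependent ℂ (matA Z₂ᵀ (fun h => (C h)ᵀ)) := by
      rw [← rank_eq_card_iff, ← matB_transpose, Matrix.rank_transpose]
      exact hB
    refine ⟨?_, ?_, ?_, ?_⟩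
    · show (matA _ _).rank = v₁'
      rw [matA_bridge h₁ h₂ P Q Z₁ C]
      exact (rank_submatrix_equiv _ (finCongr h₁)
        ((Equiv.refl (Fin w₁)).sumCongr
          ((Equiv.refl (Fin r)).prodCongr (finCongr h₂)))).trans (bigA_rank hsmallA)
    · show (matB _ _).rank = v₂'
      rw [← Matrix.rank_transpose, matB_bridge h₁ h₂ P Q Z₂ C]
      exact (rank_submatrix_equiv _ (finCongr h₂)
        ((Equiv.refl (Fin w₂')).sumCongr
          ((Equiv.refl (Fin r)).prodCongr (finCongr h₁)))).trans (bigA_rank hsmallB)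
    · show LinearIndependent ℂ _
      rw [keyA h₁ h₂ hv₁ P Q Z₁ C]
      exact (bigA_top_indep hsmallA).map' _
        (LinearMap.ker_eq_bot.mpr (LinearMap.funLeft_injective_of_surjective ℂ ℂ _ σAsurj))
    · show LinearIndependent ℂ _
      rw [keyB h₁ h₂ hv₂ P Q Z₂ C]
      exact (bigA_top_indep hsmallB).map' _
        (LinearMap.ker_eq_bot.mpr (LinearMap.funLeft_injective_of_surjective ℂ ℂ _ σBsurj))
  · -- InjOn
    rintro ⟨P, Q, Z₁, Z₂, C⟩ ⟨hA, hB⟩ ⟨P', Q', Z₁', Z₂', C'⟩ ⟨hA', hB'⟩ heq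
    obtain ⟨hx₁, hx₂, hy⟩ : _ ∧ _ ∧ _ := by
      simpa only [Prod.mk.injEq] using heq
    have hZ₁ : Z₁ = Z₁' := by
      ext i j
      have := congrFun (congrFun hx₁ (Fin.castLE hv₁ i)) j
      simpa [-Fin.cast_castLE] using this
    have hPZ : P * Z₁ = P' * Z₁' := by
      ext i j
      have := congrFun (congrFun hx₁ (Fin.cast h₁.symm (Fin.natAdd v₁' i))) j
      simpa using this
    have hZ₂ : Z₂ = Z₂' := by
      ext i j
      have := congrFun (congrFun hx₂ i) (Fin.castLE hv₂ j)
      simpa [-Fin.cast_castLE] using this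
    have hZQ : Z₂ * Q = Z₂' * Q' := by
      ext i j
      have := congrFun (congrFun hx₂ i) (Fin.cast h₂.symm (Fin.natAdd v₂' j))
      simpa using this
    have hC : C = C' := by
      funext h
      ext i j
      have := congrFun (congrFun (congrFun hy h) (Fin.castLE hv₁ i)) (Fin.castLE hv₂ j)
      simpa [-Fin.cast_castLE] using this
    have hPC : ∀ h, P * C h = P' * C' h := by
      intro h
      ext i j
      have := congrFun (congrFun (congrFun hy h)
        (Fin.cast h₁.symm (Fin.natAdd v₁' i))) (Fin.castLE hv₂ j)
      simpa [-Fin.cast_castLE] using this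
    have hCQ : ∀ h, C h * Q = C' h * Q' := by
      intro h
      ext i j
      have := congrFun (congrFun (congrFun hy h)
        (Fin.castLE hv₁ i)) (Fin.cast h₂.symm (Fin.natAdd v₂' j))
      simpa [-Fin.cast_castLE] using this
    obtain rfl := hZ₁
    obtain rfl := hZ₂
    obtain rfl := hC
    have hsmallA : LinearIndependent ℂ (matA Z₁ C) := (rank_eq_card_iff _).mp hA
    have hsmallB : LinearIndependent ℂ (matA Z₂ᵀ (fun h => (C h)ᵀ)) := by
      rw [← rank_eq_card_iff, ← matB_transpose, Matrix.rank_transpose]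
      exact hB
    have hPP : P = P' := by
      refine lin_indep_cancel hsmallA ?_
      rw [mul_matA, mul_matA, hPZ, show (fun h => P * C h) = fun h => P' * C h from funext hPC]
    have hQQ : Q = Q' := by
      have hT : Qᵀ = Q'ᵀ := by
        refine lin_indep_cancel hsmallB ?_
        rw [mul_matA, mul_matA]
        have e1 : Qᵀ * Z₂ᵀ = Q'ᵀ * Z₂ᵀ := by
          rw [← Matrix.transpose_mul, ← Matrix.transpose_mul, hZQ]
        have e2 : (fun h => Qᵀ * (C h)ᵀ) = fun h => Q'ᵀ * (C h)ᵀ := by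
          funext h
          rw [← Matrix.transpose_mul, ← Matrix.transpose_mul, hCQ h]
        rw [e1, e2]
      have := congrArg Matrix.transpose hT
      simpa using this
    rw [hPP, hQQ]
  · -- SurjOn
    rintro ⟨x₁, x₂, y⟩ ⟨hp1, hp2, hp3, hp4⟩
    have hMArank : ((matA x₁ y).submatrix (Fin.cast h₁.symm) id).rank = v₁' :=
      (rank_submatrix_equiv _ (finCongr h₁.symm) (Equiv.refl _)).trans hp1
    have hMAtop : LinearIndependent ℂ
        (fun i : Fin v₁' => ((matA x₁ y).submatrix (Fin.cast h₁.symm) id)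
          (Fin.castAdd (w₁' - v₁') i)) := hp3
    obtain ⟨P, hP⟩ := exists_coeffs _ hMArank hMAtop
    have hMBrank : (((matB x₂ y)ᵀ).submatrix (Fin.cast h₂.symm) id).rank = v₂' :=
      (rank_submatrix_equiv _ (finCongr h₂.symm) (Equiv.refl _)).trans
        ((Matrix.rank_transpose _).trans hp2)
    have hMBtop : LinearIndependent ℂ
        (fun j : Fin v₂' => (((matB x₂ y)ᵀ).submatrix (Fin.cast h₂.symm) id)
          (Fin.castAdd (w₂ - v₂') j)) := hp4
    obtain ⟨Q₀, hQ⟩ := exists_coeffs _ hMBrank hMBtop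
    set Z₁ : Matrix (Fin v₁') (Fin w₁) ℂ :=
      Matrix.of fun i j => x₁ (Fin.castLE hv₁ i) j with hZ₁def
    set Z₂ : Matrix (Fin w₂') (Fin v₂') ℂ :=
      Matrix.of fun i j => x₂ i (Fin.castLE hv₂ j) with hZ₂def
    set C : Fin r → Matrix (Fin v₁') (Fin v₂') ℂ :=
      fun h => Matrix.of fun i j => y h (Fin.castLE hv₁ i) (Fin.castLE hv₂ j) with hCdef
    have E1 : (vstack Z₁ (P * Z₁)).submatrix (Fin.cast h₁) id = x₁ := by
      ext i j
      show vstack Z₁ (P * Z₁) (Fin.cast h₁ i) j = x₁ i j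
      rw [show x₁ i = x₁ (Fin.cast h₁.symm (Fin.cast h₁ i)) from rfl]
      generalize Fin.cast h₁ i = i'
      refine Fin.addCases (fun i₀ => ?_) (fun i₀ => ?_) i'
      · rw [vstack_castAdd]; rfl
      · rw [vstack_natAdd, Matrix.mul_apply]
        have := congrFun (hP i₀) (Sum.inl j)
        simp only [Finset.sum_apply, Pi.smul_apply, smul_eq_mul] at this
        exact this.symm
    have E2 : (hstack Z₂ (Z₂ * Q₀ᵀ)).submatrix id (Fin.cast h₂) = x₂ := by
      ext i j
      show hstack Z₂ (Z₂ * Q₀ᵀ) i (Fin.cast h₂ j) = x₂ i j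
      rw [show x₂ i j = x₂ i (Fin.cast h₂.symm (Fin.cast h₂ j)) from rfl]
      generalize Fin.cast h₂ j = j'
      refine Fin.addCases (fun j₀ => ?_) (fun j₀ => ?_) j'
      · rw [hstack_castAdd]; rfl
      · rw [hstack_natAdd, Matrix.mul_apply]
        have := congrFun (hQ j₀) (Sum.inl i)
        simp only [Finset.sum_apply, Pi.smul_apply, smul_eq_mul] at this
        have comm : (∑ l, Z₂ i l * Q₀ᵀ l j₀) = ∑ l, Q₀ j₀ l * Z₂ i l :=
          Finset.sum_congr rfl fun l _ => mul_comm _ _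
        rw [comm]
        exact this.symm
    have EP : ∀ (h : Fin r) (i₀ : Fin (w₁' - v₁')) (c : Fin v₂'),
        y h (Fin.cast h₁.symm (Fin.natAdd v₁' i₀)) (Fin.castLE hv₂ c) = (P * C h) i₀ c := by
      intro h i₀ c
      have := congrFun (hP i₀) (Sum.inr (h, Fin.castLE hv₂ c))
      simp only [Finset.sum_apply, Pi.smul_apply, smul_eq_mul] at this
      rw [Matrix.mul_apply]
      exact this
    have E3 : (fun h => (vstack (hstack (C h) (C h * Q₀ᵀ))
        (hstack (P * C h) (P * C h * Q₀ᵀ))).submatrix (Fin.cast h₁) (Fin.cast h₂)) = y := by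
      funext h
      ext i j
      show (vstack (hstack (C h) (C h * Q₀ᵀ)) (hstack (P * C h) (P * C h * Q₀ᵀ)))
        (Fin.cast h₁ i) (Fin.cast h₂ j) = y h i j
      rw [show y h i j
        = y h (Fin.cast h₁.symm (Fin.cast h₁ i)) (Fin.cast h₂.symm (Fin.cast h₂ j)) from rfl]
      generalize Fin.cast h₁ i = i'
      generalize Fin.cast h₂ j = j'
      refine Fin.addCases (fun i₀ => ?_) (fun i₀ => ?_) i' <;>
        refine Fin.addCases (fun j₀ => ?_) (fun j₀ => ?_) j'
      · rw [vstack_castAdd, hstack_castAdd]; rfl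
      · rw [vstack_castAdd, hstack_natAdd, Matrix.mul_apply]
        have := congrFun (hQ j₀) (Sum.inr (h, Fin.castLE hv₁ i₀))
        simp only [Finset.sum_apply, Pi.smul_apply, smul_eq_mul] at this
        have comm : (∑ l, C h i₀ l * Q₀ᵀ l j₀) = ∑ l, Q₀ j₀ l * C h i₀ l :=
          Finset.sum_congr rfl fun l _ => mul_comm _ _
        rw [comm]
        exact this.symm
      · rw [vstack_natAdd, hstack_castAdd]
        exact (EP h i₀ j₀).symm
      · rw [vstack_natAdd, hstack_natAdd, Matrix.mul_apply]
        have hq := congrFun (hQ j₀) (Sum.inr (h, Fin.cast h₁.symm (Fin.natAdd v₁' i₀)))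
        simp only [Finset.sum_apply, Pi.smul_apply, smul_eq_mul] at hq
        have comm : (∑ l, (P * C h) i₀ l * Q₀ᵀ l j₀) = ∑ l, Q₀ j₀ l * (P * C h) i₀ l :=
          Finset.sum_congr rfl fun l _ => mul_comm _ _
        rw [comm, show (∑ l, Q₀ j₀ l * (P * C h) i₀ l)
          = ∑ l, Q₀ j₀ l * y h (Fin.cast h₁.symm (Fin.natAdd v₁' i₀)) (Fin.castLE hv₂ l) from
            Finset.sum_congr rfl fun l _ => by rw [EP h i₀ l]]
        exact hq.symm
    have srcA : (matA Z₁ C).rank = v₁' := by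
      rw [rank_eq_card_iff]
      apply bigA_small_indep (P := P) (Q := Q₀ᵀ)
      apply LinearIndependent.of_comp
        (LinearMap.funLeft ℂ ℂ (Sum.map id (Prod.map id (Fin.cast h₂))))
      rw [← keyA h₁ h₂ hv₁ P Q₀ᵀ Z₁ C, E1, E3]
      exact hp3
    have srcB : (matB Z₂ C).rank = v₂' := by
      rw [← Matrix.rank_transpose, matB_transpose, rank_eq_card_iff]
      apply bigA_small_indep (P := Q₀ᵀᵀ) (Q := Pᵀ)
      apply LinearIndependent.of_comp
        (LinearMap.funLeft ℂ ℂ (Sum.map id (Prod.map id (Fin.cast h₁))))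
      rw [← keyB h₁ h₂ hv₂ P Q₀ᵀ Z₂ C, E2, E3]
      exact hp4
    exact ⟨⟨P, Q₀ᵀ, Z₁, Z₂, C⟩, ⟨srcA, srcB⟩, Prod.ext E1 (Prod.ext E2 E3)⟩
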